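/- Telescoping identity producing the materialized symmetry of the linearly deformed tile code: for each natural number j let h_j : ℤ × ℤ → ZMod 2 be the indicator function of the four-point set {(2^{j+1}−2, 2^j−1), (2^{j+1}−2, 2^{j+1}−1), (2^{j+2}−2, 2^{j+1}−1), (2^{j+2}−2, 2^{j+2}−1)} ⊆ ℤ × ℤ. Then for every natural number k, the sum ∑_{j=0}^{k} h_j (pointwise in ZMod 2) equals the indicator function of the four-point set {(0,0), (0,1), (2^{k+2}−2, 2^{k+1}−1), (2^{k+2}−2, 2^{k+2}−1)}. -/

import Mathlib

lemma ind_add_aux (P Q R : Prop) [Decidable P] [Decidable Q] [Decidable R]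
    (hR : R ↔ ((P ∧ ¬ Q) ∨ (Q ∧ ¬ P))) :
    ((if P then (1 : ZMod 2) else 0) + (if Q then 1 else 0)) = if R then 1 else 0 := by
  split_ifs with h1 h2 h3 <;> first | rfl | decide | (exact absurd (hR.mpr (by tauto)) (by assumption)) | (exact absurd (hR.mp (by assumption)) (by tauto))


/-- Telescoping identity producing the materialized symmetry of the linearly
deformed tile code: with `h j` the `ZMod 2`-valued indicator function of the
four-point set
`{(2^{j+1}−2, 2^j−1), (2^{j+1}−2, 2^{j+1}−1), (2^{j+2}−2, 2^{j+1}−1), (2^{j+2}−2, 2^{j+2}−1)}`,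
the pointwise sum `∑_{j=0}^{k} h j` is the indicator function of
`{(0,0), (0,1), (2^{k+2}−2, 2^{k+1}−1), (2^{k+2}−2, 2^{k+2}−1)}`. -/
theorem tile_symmetry_telescoping (h : ℕ → ℤ × ℤ → ZMod 2)
    (hh : ∀ (j : ℕ) (v : ℤ × ℤ),
      h j v = if v = ((2 : ℤ) ^ (j + 1) - 2, (2 : ℤ) ^ j - 1) ∨
          v = ((2 : ℤ) ^ (j + 1) - 2, (2 : ℤ) ^ (j + 1) - 1) ∨
          v = ((2 : ℤ) ^ (j + 2) - 2, (2 : ℤ) ^ (j + 1) - 1) ∨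
          v = ((2 : ℤ) ^ (j + 2) - 2, (2 : ℤ) ^ (j + 2) - 1) then 1 else 0)
    (k : ℕ) (v : ℤ × ℤ) :
    ∑ j ∈ Finset.range (k + 1), h j v =
      if v = ((0 : ℤ), (0 : ℤ)) ∨ v = ((0 : ℤ), (1 : ℤ)) ∨
          v = ((2 : ℤ) ^ (k + 2) - 2, (2 : ℤ) ^ (k + 1) - 1) ∨
          v = ((2 : ℤ) ^ (k + 2) - 2, (2 : ℤ) ^ (k + 2) - 1) then 1 else 0 := by
  induction k generalizing v with
  | zero =>
      rw [Finset.sum_range_one, hh]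
      norm_num
  | succ k ih =>
      rw [Finset.sum_range_succ, ih, hh]
      refine ind_add_aux _ _ _ ?_
      obtain ⟨a, b⟩ := v
      have hx : (2 : ℤ) ≤ 2 ^ (k + 1) := by
        calc (2:ℤ) = 2 ^ 1 := by norm_num
        _ ≤ 2 ^ (k + 1) := by
          apply pow_le_pow_right₀ <;> omega
      have e2 : (2 : ℤ) ^ (k + 2) = 2 * 2 ^ (k + 1) := by ring
      have e3 : (2 : ℤ) ^ (k + 3) = 4 * 2 ^ (k + 1) := by ring
      have e2' : (2 : ℤ) ^ (k + 1 + 1) = 2 * 2 ^ (k + 1) := by ring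
      have e3' : (2 : ℤ) ^ (k + 1 + 2) = 4 * 2 ^ (k + 1) := by ring
      simp only [Prod.mk.injEq, e2, e3, e2', e3']
      generalize (2 : ℤ) ^ (k + 1) = x at hx ⊢
      clear hh ih e2 e3 e2' e3'
      constructor
      · rintro (⟨ha, hb⟩ | ⟨ha, hb⟩ | ⟨ha, hb⟩ | ⟨ha, hb⟩) <;> omega
      · rintro (⟨h1, h2⟩ | ⟨h1, h2⟩) <;>
          rcases h1 with ⟨ha, hb⟩ | ⟨ha, hb⟩ | ⟨ha, hb⟩ | ⟨ha, hb⟩ <;> omega
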